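/- arXiv:0907.1689 — 6 statements merged into one kernel-verified Lean document; each statement's English description precedes it below -/
import Mathlib

section
/- Let n > 1 be odd, x ∈ Φ(2n), y = α⁻¹(x) ∈ Φ(n) (i.e., y = x if x < n, else y = x - n), and z = β(y). Then Γ(x/(2n)) = ε(x) · 2√π · 2^(-x/n) · Γ(y/n) / Γ(z/n), where ε(x) = 1 if x < n and ε(x) = 2 if x > n. Moreover x - n = 2y - 2z and y ≡ 2z (mod n). -/
theorem gamma_lemma (n x : ℕ) (hn : 1 < n) (hodd : Odd n)
    (hx0 : 0 < x) (hx2n : x < 2 * n) (hcop : Nat.gcd x (2 * n) = 1)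
    (y z : ℕ) (hy : y = if x < n then x else x - n)
    (hz : z = if Even y then y / 2 else (y + n) / 2) :
    Real.Gamma (x / (2 * n)) =
      (if x < n then (1 : ℝ) else 2) * (2 * Real.sqrt Real.pi) *
        (2 : ℝ) ^ (-((x : ℝ) / n)) * Real.Gamma (y / n) / Real.Gamma (z / n) ∧
      (x : ℤ) - n = 2 * y - 2 * z ∧ 2 * z ≡ y [MOD n] := by
  have hn0 : (0:ℝ) < n := by positivity
  have hn0' : (n:ℝ) ≠ 0 := hn0.ne'
  -- x is odd
  have hxodd : x % 2 = 1 := by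
    rcases Nat.even_or_odd x with h | h
    · exfalso
      have h2 : 2 ∣ Nat.gcd x (2 * n) := Nat.dvd_gcd h.two_dvd ⟨n, rfl⟩
      rw [hcop] at h2
      omega
    · exact Nat.odd_iff.mp h
  have hxn : x ≠ n := by
    intro h
    have : Nat.gcd x (2 * n) = n := by
      rw [h]; exact Nat.gcd_eq_left ⟨2, by ring⟩
    omega
  obtain ⟨m, hm⟩ := hodd
  by_cases hlt : x < n
  · -- x < n, y = x (odd), z = (x + n)/2
    rw [if_pos hlt] at hy
    have hyodd : ¬ Even y := by rw [hy, Nat.even_iff]; omega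
    rw [if_neg hyodd] at hz
    have h2z : 2 * z = x + n := by rw [hz, hy]; omega
    refine ⟨?_, by omega, ?_⟩
    swap
    · show (2 * z) % n = y % n
      rw [show 2 * z = y + n by omega, Nat.add_mod_right]
    rw [if_pos hlt]
    have hzpos : 0 < z := by omega
    have hzR : 0 < Real.Gamma ((z:ℝ)/n) :=
      Real.Gamma_pos_of_pos (by positivity : (0:ℝ) < (z:ℝ)/n)
    rw [eq_div_iff hzR.ne']
    have h2zR : (2:ℝ) * z = (x:ℝ) + n := by
      have := congrArg (Nat.cast : ℕ → ℝ) h2z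
      push_cast at this
      linarith
    have hz' : (z:ℝ)/n = (x:ℝ)/(2*n) + 1/2 := by
      rw [show (z:ℝ) = ((x:ℝ) + n)/2 by linarith]
      field_simp
    have hy' : (y:ℝ)/n = 2 * ((x:ℝ)/(2*n)) := by
      rw [hy]; field_simp
    rw [hz', hy', Real.Gamma_mul_Gamma_add_half]
    have h2a : 2 * ((x:ℝ)/(2*n)) = (x:ℝ)/n := by field_simp
    rw [h2a]
    have hpow : (2:ℝ) ^ (1 - (x:ℝ)/n) = 2 * (2:ℝ) ^ (-((x:ℝ)/n)) := by
      rw [show (1 - (x:ℝ)/n) = 1 + (-((x:ℝ)/n)) by ring,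
        Real.rpow_add two_pos, Real.rpow_one]
    rw [hpow]; ring
  · -- x > n, y = x - n (even), z = y / 2
    rw [if_neg hlt] at hy
    have hxgt : n < x := by omega
    have hyeven : Even y := by rw [hy, Nat.even_iff]; omega
    rw [if_pos hyeven] at hz
    have h2z : 2 * z = x - n := by rw [hz, hy]; omega
    refine ⟨?_, by omega, ?_⟩
    swap
    · show (2 * z) % n = y % n
      rw [show 2 * z = y by omega]
    rw [if_neg hlt]
    have hzpos : 0 < z := by omega
    have hzR : 0 < Real.Gamma ((z:ℝ)/n) :=
      Real.Gamma_pos_of_pos (by positivity : (0:ℝ) < (z:ℝ)/n)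
    rw [eq_div_iff hzR.ne']
    have h2zR : (2:ℝ) * z = (x:ℝ) - n := by
      have h2z' : 2 * z + n = x := by omega
      have := congrArg (Nat.cast : ℕ → ℝ) h2z'
      push_cast at this
      linarith
    have hyR : (y:ℝ) = (x:ℝ) - n := by
      have hy' : y + n = x := by omega
      have := congrArg (Nat.cast : ℕ → ℝ) hy'
      push_cast at this
      linarith
    have hz' : (z:ℝ)/n = (x:ℝ)/(2*n) - 1/2 := by
      rw [show (z:ℝ) = ((x:ℝ) - n)/2 by linarith]
      field_simp
    have hy' : (y:ℝ)/n = 2 * ((x:ℝ)/(2*n) - 1/2) := by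
      rw [hyR]; field_simp
    have key := Real.Gamma_mul_Gamma_add_half ((x:ℝ)/(2*n) - 1/2)
    rw [show (x:ℝ)/(2*n) - 1/2 + 1/2 = (x:ℝ)/(2*n) by ring] at key
    rw [hz', hy', mul_comm (Real.Gamma ((x:ℝ)/(2*n))), key]
    have hpow : (2:ℝ) ^ (1 - 2 * ((x:ℝ)/(2*n) - 1/2)) = 4 * (2:ℝ) ^ (-((x:ℝ)/n)) := by
      have h2a : 1 - 2 * ((x:ℝ)/(2*n) - 1/2) = 2 + (-((x:ℝ)/n)) := by
        field_simp; ring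
      rw [h2a, Real.rpow_add two_pos]
      norm_num
    rw [hpow]; ring
end

section
/- Let n > 1 be odd and let A be a coset of the cyclic subgroup of (Z/2nZ)× generated by n + 2, with each element of A represented by its representative in (0, 2n). Then the sum of these representatives equals n·|A|. -/
open scoped Pointwise

/-- Combinatorial core: if `T` carries a "value" function `v` taking odd values in `(0, 2n)`
avoiding `n`, and a self-bijection `g` of `T` which doubles `v` modulo `n`, then the sum of the
values is `n * T.card`. -/
theorem coset_sum_aux {α : Type*} (n : ℕ) (hn3 : 3 ≤ n) (hnodd : n % 2 = 1)
    (T : Finset α) (v : α → ℕ) (g : α → α)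
    (hsum : ∀ f : α → ℕ, ∑ x ∈ T, f (g x) = ∑ x ∈ T, f x)
    (hvodd : ∀ x ∈ T, v x % 2 = 1)
    (hvlt : ∀ x ∈ T, v x < 2 * n)
    (hvne : ∀ x ∈ T, v x ≠ n)
    (hg : ∀ x ∈ T, v (g x) % n = (2 * (v x % n)) % n) :
    ∑ x ∈ T, v x = n * T.card := by
  have hrlt : ∀ x : α, v x % n < n := fun x => Nat.mod_lt _ (by omega)
  have hmod : ∀ x : α, (2 * (v x % n)) % n =
      if n < 2 * (v x % n) then 2 * (v x % n) - n else 2 * (v x % n) := by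
    intro x
    have h1 := hrlt x
    split
    · rw [Nat.mod_eq_sub_mod (by omega), Nat.mod_eq_of_lt (by omega)]
    · exact Nat.mod_eq_of_lt (by omega)
  -- Claim 1 : ∑ r = n * H
  have hR : 2 * (∑ x ∈ T, v x % n) =
      (∑ x ∈ T, v x % n) + n * ∑ x ∈ T, (if n < 2 * (v x % n) then 1 else 0) := by
    have h1 : ∑ x ∈ T, v x % n = ∑ x ∈ T, (2 * (v x % n)) % n := by
      conv_lhs => rw [← hsum (fun x => v x % n)]
      exact Finset.sum_congr rfl fun x hx => hg x hx
    calc 2 * ∑ x ∈ T, v x % n = ∑ x ∈ T, 2 * (v x % n) := by rw [Finset.mul_sum]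
      _ = ∑ x ∈ T, ((2 * (v x % n)) % n + n * (if n < 2 * (v x % n) then 1 else 0)) := by
          refine Finset.sum_congr rfl fun x _ => ?_
          rw [hmod x]; have := hrlt x; split <;> omega
      _ = (∑ x ∈ T, (2 * (v x % n)) % n)
            + n * ∑ x ∈ T, (if n < 2 * (v x % n) then 1 else 0) := by
          rw [Finset.sum_add_distrib, Finset.mul_sum]
      _ = _ := by rw [← h1]
  have hRH : ∑ x ∈ T, v x % n = n * ∑ x ∈ T, (if n < 2 * (v x % n) then 1 else 0) := by omega
  -- Claim 2 : E = L
  have hEL : ∑ x ∈ T, (if v x % n % 2 = 0 then 1 else 0) =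
      ∑ x ∈ T, (if 2 * (v x % n) < n then 1 else 0) := by
    conv_lhs => rw [← hsum (fun x => if v x % n % 2 = 0 then 1 else 0)]
    refine Finset.sum_congr rfl fun x hx => ?_
    rw [hg x hx, hmod x]
    have h1 := hrlt x
    split_ifs <;> omega
  -- Claim 3 : L + H = card
  have hLH : (∑ x ∈ T, (if 2 * (v x % n) < n then 1 else 0))
      + (∑ x ∈ T, (if n < 2 * (v x % n) then 1 else 0)) = T.card := by
    rw [← Finset.sum_add_distrib]
    calc ∑ x ∈ T, ((if 2 * (v x % n) < n then 1 else 0)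
          + (if n < 2 * (v x % n) then 1 else 0))
        = ∑ _x ∈ T, 1 := by
          refine Finset.sum_congr rfl fun x _ => ?_
          have := hrlt x
          split_ifs <;> omega
      _ = T.card := by simp
  -- Claim 4 : pointwise decomposition of v
  have hv_split : ∀ x ∈ T, v x = v x % n + n * (if v x % n % 2 = 0 then 1 else 0) := by
    intro x hx
    have h2 := hvodd x hx
    have h3 := hvlt x hx
    have h4 := hvne x hx
    have h1 : v x % n = v x ∨ (n < v x ∧ v x % n = v x - n) := by
      rcases lt_or_gt_of_ne h4 with h | h
      · exact Or.inl (Nat.mod_eq_of_lt h)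
      · exact Or.inr ⟨h, by rw [Nat.mod_eq_sub_mod h.le, Nat.mod_eq_of_lt (by omega)]⟩
    split_ifs with h <;> omega
  calc ∑ x ∈ T, v x
      = ∑ x ∈ T, (v x % n + n * (if v x % n % 2 = 0 then 1 else 0)) :=
        Finset.sum_congr rfl hv_split
    _ = (∑ x ∈ T, v x % n) + n * ∑ x ∈ T, (if v x % n % 2 = 0 then 1 else 0) := by
        rw [Finset.sum_add_distrib, Finset.mul_sum]
    _ = n * T.card := by rw [hRH, hEL, ← Nat.mul_add, Nat.add_comm, hLH]

theorem coset_sum (n : ℕ) (hn : 1 < n) (hodd : Odd n)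
    (u : (ZMod (2 * n))ˣ) (hu : (u : ZMod (2 * n)) = (n : ZMod (2 * n)) + 2)
    (a : (ZMod (2 * n))ˣ) :
    ∑ᶠ x ∈ a • ((Subgroup.zpowers u : Subgroup (ZMod (2 * n))ˣ) : Set (ZMod (2 * n))ˣ),
        ((x : ZMod (2 * n)).val) =
      n * Nat.card ↥(a • ((Subgroup.zpowers u : Subgroup (ZMod (2 * n))ˣ) : Set (ZMod (2 * n))ˣ)) := by
  haveI : NeZero (2 * n) := ⟨by omega⟩
  have hn3 : 3 ≤ n := by rcases hodd with ⟨k, hk⟩; omega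
  have hnodd : n % 2 = 1 := Nat.odd_iff.mp hodd
  set S : Set (ZMod (2 * n))ˣ :=
    a • ((Subgroup.zpowers u : Subgroup (ZMod (2 * n))ˣ) : Set (ZMod (2 * n))ˣ) with hS
  have hSfin : S.Finite := Set.toFinite S
  have hsmul : ∀ x y : (ZMod (2 * n))ˣ, x • y = x * y := fun x y =>
    Units.ext (by rw [smul_eq_mul])
  -- membership is preserved by multiplication by u
  have hmem : ∀ x : (ZMod (2 * n))ˣ, x ∈ S ↔ u * x ∈ S := by
    intro x
    constructor
    · intro hx
      rw [hS, Set.mem_smul_set] at hx ⊢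
      obtain ⟨y, hy, hxy⟩ := hx
      refine ⟨u * y, Subgroup.mul_mem _ (Subgroup.mem_zpowers u) hy, ?_⟩
      rw [hsmul] at hxy ⊢
      rw [mul_left_comm, hxy]
    · intro hx
      rw [hS, Set.mem_smul_set] at hx ⊢
      obtain ⟨y, hy, hxy⟩ := hx
      refine ⟨u⁻¹ * y, Subgroup.mul_mem _ (Subgroup.inv_mem _ (Subgroup.mem_zpowers u)) hy, ?_⟩
      rw [hsmul] at hxy ⊢
      rw [mul_left_comm, hxy, inv_mul_cancel_left]
  have hsum : ∀ f : (ZMod (2 * n))ˣ → ℕ,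
      ∑ x ∈ hSfin.toFinset, f (u * x) = ∑ x ∈ hSfin.toFinset, f x := by
    intro f
    exact Finset.sum_bijective (fun x => u * x) (Group.mulLeft_bijective u)
      (fun x => by rw [hSfin.mem_toFinset, hSfin.mem_toFinset, ← hmem x]) (fun x _ => rfl)
  -- value facts
  have hcop : ∀ x : (ZMod (2 * n))ˣ, Nat.Coprime ((x : ZMod (2 * n)).val) (2 * n) :=
    fun x => ZMod.val_coe_unit_coprime x
  have hvodd : ∀ x : (ZMod (2 * n))ˣ, (x : ZMod (2 * n)).val % 2 = 1 := by
    intro x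
    rcases Nat.even_or_odd ((x : ZMod (2 * n)).val) with he | ho
    · exfalso
      have h2 : (2 : ℕ) ∣ Nat.gcd ((x : ZMod (2 * n)).val) (2 * n) :=
        Nat.dvd_gcd he.two_dvd ⟨n, rfl⟩
      rw [hcop x] at h2; omega
    · exact Nat.odd_iff.mp ho
  have hvlt : ∀ x : (ZMod (2 * n))ˣ, (x : ZMod (2 * n)).val < 2 * n := fun x => ZMod.val_lt _
  have hvne : ∀ x : (ZMod (2 * n))ˣ, (x : ZMod (2 * n)).val ≠ n := by
    intro x h
    have hd : n ∣ Nat.gcd ((x : ZMod (2 * n)).val) (2 * n) :=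
      Nat.dvd_gcd ⟨1, by omega⟩ ⟨2, by ring⟩
    rw [hcop x] at hd
    exact absurd (Nat.le_of_dvd one_pos hd) (by omega)
  have huval : (u : ZMod (2 * n)).val = n + 2 := by
    rw [hu]
    have h1 : ((n : ZMod (2 * n)) + 2) = ((n + 2 : ℕ) : ZMod (2 * n)) := by push_cast; ring
    rw [h1, ZMod.val_natCast, Nat.mod_eq_of_lt (by omega)]
  have hg : ∀ x : (ZMod (2 * n))ˣ, ((u * x : (ZMod (2 * n))ˣ) : ZMod (2 * n)).val % n =
      (2 * ((x : ZMod (2 * n)).val % n)) % n := by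
    intro x
    rw [Units.val_mul, ZMod.val_mul, huval, Nat.mod_mod_of_dvd _ ⟨2, by ring⟩,
      Nat.mul_mod (n + 2), Nat.add_mod_left, ← Nat.mul_mod, Nat.mul_mod 2,
      show (2 : ℕ) % n = 2 from Nat.mod_eq_of_lt (by omega)]
  -- convert finsum and Nat.card to Finset sums
  have hcard : Nat.card ↥S = hSfin.toFinset.card := by
    rw [Nat.card_coe_set_eq, Set.ncard_eq_toFinset_card S hSfin]
  have hfs : ∑ᶠ x ∈ S, ((x : ZMod (2 * n)).val) =
      ∑ x ∈ hSfin.toFinset, ((x : ZMod (2 * n)).val) := by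
    conv_lhs => rw [← hSfin.coe_toFinset]
    exact finsum_mem_coe_finset _ _
  rw [hfs, hcard]
  exact coset_sum_aux n hn3 hnodd hSfin.toFinset (fun x => (x : ZMod (2 * n)).val)
    (fun x => u * x) hsum (fun x _ => hvodd x) (fun x _ => hvlt x) (fun x _ => hvne x)
    (fun x _ => hg x)
end

section
/- Γ(1/62) · Γ(33/62) · Γ(35/62) · Γ(39/62) · Γ(47/62) = 2^4 · π^{5/2}. -/
open Real

theorem gamma_product_62_subgroup :
    Real.Gamma (1 / 62) * Real.Gamma (33 / 62) * Real.Gamma (35 / 62) *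
        Real.Gamma (39 / 62) * Real.Gamma (47 / 62) =
      2 ^ 4 * Real.pi ^ ((5 : ℝ) / 2) := by
  have h1 := Real.Gamma_mul_Gamma_add_half (1/31)
  have h2 := Real.Gamma_mul_Gamma_add_half (2/31)
  have h3 := Real.Gamma_mul_Gamma_add_half (4/31)
  have h4 := Real.Gamma_mul_Gamma_add_half (8/31)
  have h5 := Real.Gamma_mul_Gamma_add_half (1/62)
  rw [show (1:ℝ)/31 + 1/2 = 33/62 by norm_num, show (2:ℝ)*(1/31) = 2/31 by norm_num] at h1
  rw [show (2:ℝ)/31 + 1/2 = 35/62 by norm_num, show (2:ℝ)*(2/31) = 4/31 by norm_num] at h2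
  rw [show (4:ℝ)/31 + 1/2 = 39/62 by norm_num, show (2:ℝ)*(4/31) = 8/31 by norm_num] at h3
  rw [show (8:ℝ)/31 + 1/2 = 47/62 by norm_num, show (2:ℝ)*(8/31) = 16/31 by norm_num] at h4
  rw [show (1:ℝ)/62 + 1/2 = 16/31 by norm_num, show (2:ℝ)*(1/62) = 1/31 by norm_num] at h5
  have hC : Real.Gamma (1/31) * Real.Gamma (2/31) * Real.Gamma (4/31) * Real.Gamma (8/31)
      * Real.Gamma (16/31) ≠ 0 := by
    have g1 := Real.Gamma_pos_of_pos (show (0:ℝ) < 1/31 by norm_num)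
    have g2 := Real.Gamma_pos_of_pos (show (0:ℝ) < 2/31 by norm_num)
    have g3 := Real.Gamma_pos_of_pos (show (0:ℝ) < 4/31 by norm_num)
    have g4 := Real.Gamma_pos_of_pos (show (0:ℝ) < 8/31 by norm_num)
    have g5 := Real.Gamma_pos_of_pos (show (0:ℝ) < 16/31 by norm_num)
    positivity
  have hA : (2:ℝ)^((1:ℝ)-2/31) * (2:ℝ)^((1:ℝ)-4/31) * (2:ℝ)^((1:ℝ)-8/31)
      * (2:ℝ)^((1:ℝ)-16/31) * (2:ℝ)^((1:ℝ)-1/31) * √π^5 = 2^4 * π^((5:ℝ)/2) := by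
    rw [← Real.rpow_add two_pos, ← Real.rpow_add two_pos, ← Real.rpow_add two_pos,
      ← Real.rpow_add two_pos, Real.sqrt_eq_rpow,
      ← Real.rpow_natCast (π ^ ((1:ℝ)/2)) 5, ← Real.rpow_mul Real.pi_pos.le]
    norm_num
  apply mul_right_cancel₀ hC
  calc Real.Gamma (1 / 62) * Real.Gamma (33 / 62) * Real.Gamma (35 / 62) *
        Real.Gamma (39 / 62) * Real.Gamma (47 / 62) *
        (Real.Gamma (1/31) * Real.Gamma (2/31) * Real.Gamma (4/31) * Real.Gamma (8/31)
          * Real.Gamma (16/31))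
      = (Real.Gamma (1/31) * Real.Gamma (33/62)) * (Real.Gamma (2/31) * Real.Gamma (35/62)) *
        (Real.Gamma (4/31) * Real.Gamma (39/62)) * (Real.Gamma (8/31) * Real.Gamma (47/62)) *
        (Real.Gamma (1/62) * Real.Gamma (16/31)) := by ring
    _ = (Real.Gamma (2/31) * (2:ℝ)^((1:ℝ)-2/31) * √π) * (Real.Gamma (4/31) * (2:ℝ)^((1:ℝ)-4/31) * √π)
        * (Real.Gamma (8/31) * (2:ℝ)^((1:ℝ)-8/31) * √π) * (Real.Gamma (16/31) * (2:ℝ)^((1:ℝ)-16/31) * √π)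
        * (Real.Gamma (1/31) * (2:ℝ)^((1:ℝ)-1/31) * √π) := by
        rw [h1, h2, h3, h4, h5]
    _ = 2 ^ 4 * π ^ ((5:ℝ)/2) *
        (Real.Gamma (1/31) * Real.Gamma (2/31) * Real.Gamma (4/31) * Real.Gamma (8/31)
          * Real.Gamma (16/31)) := by rw [← hA]; ring
end

section
/- Γ(15/62) · Γ(23/62) · Γ(27/62) · Γ(29/62) · Γ(61/62) = 2 · π^{5/2}. -/
open Real

/-- Telescoping sine product: `sin(15π/62)⋯sin(61π/62) = 1/32`. -/
lemma sin_prod_62_coset15 :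
    sin (π*(15/62)) * sin (π*(23/62)) * sin (π*(27/62)) * sin (π*(29/62)) *
      sin (π*(61/62)) = 1/32 := by
  have hc : cos (π*(1/62)) ≠ 0 := by
    have := pi_pos
    exact ne_of_gt (cos_pos_of_mem_Ioo ⟨by linarith, by linarith⟩)
  have e61 : sin (π*(61/62)) = sin (π*(1/62)) := by
    rw [show π*(61/62) = π - π*(1/62) by ring, sin_pi_sub]
  have e29 : sin (π*(29/62)) = cos (π*(2/62)) := by
    rw [show π*(29/62) = π/2 - π*(2/62) by ring, sin_pi_div_two_sub]
  have e27 : sin (π*(27/62)) = cos (π*(4/62)) := by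
    rw [show π*(27/62) = π/2 - π*(4/62) by ring, sin_pi_div_two_sub]
  have e23 : sin (π*(23/62)) = cos (π*(8/62)) := by
    rw [show π*(23/62) = π/2 - π*(8/62) by ring, sin_pi_div_two_sub]
  have e15 : sin (π*(15/62)) = cos (π*(16/62)) := by
    rw [show π*(15/62) = π/2 - π*(16/62) by ring, sin_pi_div_two_sub]
  have h1 : sin (π*(2/62)) = 2 * sin (π*(1/62)) * cos (π*(1/62)) := by
    rw [show π*(2/62) = 2*(π*(1/62)) by ring, sin_two_mul]
  have h2 : sin (π*(4/62)) = 2 * sin (π*(2/62)) * cos (π*(2/62)) := by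
    rw [show π*(4/62) = 2*(π*(2/62)) by ring, sin_two_mul]
  have h3 : sin (π*(8/62)) = 2 * sin (π*(4/62)) * cos (π*(4/62)) := by
    rw [show π*(8/62) = 2*(π*(4/62)) by ring, sin_two_mul]
  have h4 : sin (π*(16/62)) = 2 * sin (π*(8/62)) * cos (π*(8/62)) := by
    rw [show π*(16/62) = 2*(π*(8/62)) by ring, sin_two_mul]
  have h5 : sin (π*(32/62)) = 2 * sin (π*(16/62)) * cos (π*(16/62)) := by
    rw [show π*(32/62) = 2*(π*(16/62)) by ring, sin_two_mul]
  have h6 : sin (π*(32/62)) = cos (π*(1/62)) := by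
    rw [show π*(32/62) = π/2 + π*(1/62) by ring, sin_add, sin_pi_div_two, cos_pi_div_two]
    ring
  rw [e61, e29, e27, e23, e15]
  apply mul_left_cancel₀ hc
  rw [h4, h3, h2, h1, h6] at h5
  linear_combination (-1/32 : ℝ) * h5

/-- Product of Gamma over the coset `⟨33⟩ = {1,33,35,39,47}` of `(ℤ/62)ˣ`,
via Legendre duplication along the orbit of `2` mod `31`. -/
lemma gamma_product_62_coset1 :
    Gamma (1/62) * Gamma (33/62) * Gamma (35/62) * Gamma (39/62) * Gamma (47/62)
      = 16 * Real.sqrt π ^ 5 := by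
  have d0 := Real.Gamma_mul_Gamma_add_half (1/31); norm_num at d0
  have d1 := Real.Gamma_mul_Gamma_add_half (2/31); norm_num at d1
  have d2 := Real.Gamma_mul_Gamma_add_half (4/31); norm_num at d2
  have d3 := Real.Gamma_mul_Gamma_add_half (8/31); norm_num at d3
  have d4 := Real.Gamma_mul_Gamma_add_half (16/31); norm_num at d4
  have g63 : Gamma ((63:ℝ)/62) = 1/62 * Gamma (1/62) := by
    have := Real.Gamma_add_one (show (1:ℝ)/62 ≠ 0 by norm_num); norm_num at this
    exact this
  have g32 : Gamma ((32:ℝ)/31) = 1/31 * Gamma (1/31) := by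
    have := Real.Gamma_add_one (show (1:ℝ)/31 ≠ 0 by norm_num); norm_num at this
    exact this
  rw [g63, g32] at d4
  have c : (2:ℝ) ^ ((29:ℝ)/31) * (2:ℝ)^((27:ℝ)/31) * (2:ℝ)^((23:ℝ)/31) *
      (2:ℝ)^((15:ℝ)/31) * (2:ℝ)^(-((1:ℝ)/31)) = 8 := by
    rw [← Real.rpow_add two_pos, ← Real.rpow_add two_pos, ← Real.rpow_add two_pos,
      ← Real.rpow_add two_pos]
    norm_num
  have H : (Gamma (1/31) * Gamma (33/62)) * (Gamma (2/31) * Gamma (35/62)) *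
      (Gamma (4/31) * Gamma (39/62)) * (Gamma (8/31) * Gamma (47/62)) *
      (Gamma (16/31) * (1/62 * Gamma (1/62)))
      = (Gamma (2/31) * 2 ^ ((29:ℝ)/31) * √π) * (Gamma (4/31) * 2 ^ ((27:ℝ)/31) * √π) *
        (Gamma (8/31) * 2 ^ ((23:ℝ)/31) * √π) * (Gamma (16/31) * 2 ^ ((15:ℝ)/31) * √π) *
        (1/31 * Gamma (1/31) * 2 ^ (-((1:ℝ)/31)) * √π) := by
    rw [d0, d1, d2, d3, d4]
  set U : ℝ := Gamma (1/31) * Gamma (2/31) * Gamma (4/31) * Gamma (8/31) * Gamma (16/31) with hU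
  have hUpos : 0 < U := by
    have h1 := Real.Gamma_pos_of_pos (show (0:ℝ) < 1/31 by norm_num)
    have h2 := Real.Gamma_pos_of_pos (show (0:ℝ) < 2/31 by norm_num)
    have h3 := Real.Gamma_pos_of_pos (show (0:ℝ) < 4/31 by norm_num)
    have h4 := Real.Gamma_pos_of_pos (show (0:ℝ) < 8/31 by norm_num)
    have h5 := Real.Gamma_pos_of_pos (show (0:ℝ) < 16/31 by norm_num)
    positivity
  apply mul_left_cancel₀ (ne_of_gt hUpos)
  rw [hU]
  linear_combination 62*H + 2*(Gamma (1/31) * Gamma (2/31) * Gamma (4/31) * Gamma (8/31) *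
    Gamma (16/31))*(√π^5)*c

theorem gamma_product_62_coset15 :
    Real.Gamma (15 / 62) * Real.Gamma (23 / 62) * Real.Gamma (27 / 62) *
        Real.Gamma (29 / 62) * Real.Gamma (61 / 62) =
      2 * Real.pi ^ ((5 : ℝ) / 2) := by
  have PT := gamma_product_62_coset1
  have SP := sin_prod_62_coset15
  have hp5 : Real.pi ^ ((5:ℝ)/2) = Real.sqrt π ^ 5 := by
    rw [Real.sqrt_eq_rpow, ← Real.rpow_natCast (π ^ ((1:ℝ)/2)) 5, ← Real.rpow_mul pi_pos.le]
    norm_num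
  have hpi : Real.sqrt π ^ 2 = π := Real.sq_sqrt pi_pos.le
  have spos : ∀ k : ℝ, 0 < k → k < 62 → 0 < sin (π * (k/62)) := fun k h1 h2 => by
    have hπ := pi_pos
    apply sin_pos_of_pos_of_lt_pi
    · positivity
    · nlinarith
  have mk : ∀ a b : ℝ, a + b = 1 → sin (π * a) ≠ 0 →
      Gamma a * Gamma b * sin (π * a) = π := by
    intro a b hab hs
    have h := Real.Gamma_mul_Gamma_one_sub a
    rw [show (1:ℝ) - a = b by linarith, eq_div_iff hs] at h
    exact h
  have r15 := mk (15/62) (47/62) (by norm_num) (ne_of_gt (spos 15 (by norm_num) (by norm_num)))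
  have r23 := mk (23/62) (39/62) (by norm_num) (ne_of_gt (spos 23 (by norm_num) (by norm_num)))
  have r27 := mk (27/62) (35/62) (by norm_num) (ne_of_gt (spos 27 (by norm_num) (by norm_num)))
  have r29 := mk (29/62) (33/62) (by norm_num) (ne_of_gt (spos 29 (by norm_num) (by norm_num)))
  have r61 := mk (61/62) (1/62) (by norm_num) (ne_of_gt (spos 61 (by norm_num) (by norm_num)))
  have H2 : (Gamma (15/62) * Gamma (47/62) * sin (π * (15/62))) *
      (Gamma (23/62) * Gamma (39/62) * sin (π * (23/62))) *
      (Gamma (27/62) * Gamma (35/62) * sin (π * (27/62))) *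
      (Gamma (29/62) * Gamma (33/62) * sin (π * (29/62))) *
      (Gamma (61/62) * Gamma (1/62) * sin (π * (61/62))) = π*π*π*π*π := by
    rw [r15, r23, r27, r29, r61]
  have h16 : (16:ℝ) * Real.sqrt π ^ 5 ≠ 0 := by
    have := Real.sqrt_pos.mpr pi_pos
    positivity
  rw [hp5]
  apply mul_right_cancel₀ h16
  set A := Gamma (15/62) * Gamma (23/62) * Gamma (27/62) * Gamma (29/62) * Gamma (61/62) with hA
  set B := Gamma (1/62) * Gamma (33/62) * Gamma (35/62) * Gamma (39/62) * Gamma (47/62) with hB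
  set sp := Real.sqrt π with hsp
  linear_combination 32*H2 - (32*A*B)*SP + (-A)*PT +
    (-32*(sp^8 + sp^6*π + sp^4*π^2 + sp^2*π^3 + π^4))*hpi
end

section
/- For m > 1 and n = 2^m - 1, Γ(1/(2n)) · ∏_{k=1}^{m-1} Γ((2^k + n)/(2n)) = 2^{m-1} · π^{m/2}. -/
theorem zucker_product (m : ℕ) (hm : 1 < m) (n : ℕ) (hn : n = 2 ^ m - 1) :
    Real.Gamma (1 / (2 * n)) *
        ∏ k ∈ Finset.Icc 1 (m - 1), Real.Gamma (((2 ^ k : ℕ) + n) / (2 * n)) =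
      2 ^ (m - 1) * Real.pi ^ ((m : ℝ) / 2) := by
  have hn1 : 1 ≤ n := by
    subst hn
    have : 2 ^ 1 ≤ 2 ^ m := Nat.pow_le_pow_right (by norm_num) hm.le
    omega
  set N : ℝ := (n : ℝ) with hNdef
  have hN : 0 < N := by rw [hNdef]; exact_mod_cast hn1
  have hN0 : N ≠ 0 := hN.ne'
  have hNval : N = 2 ^ m - 1 := by
    rw [hNdef, hn]
    have h1 : 1 ≤ 2 ^ m := Nat.one_le_two_pow
    push_cast [h1]
    ring
  set a : ℕ → ℝ := fun k => 2 ^ k / (2 * N) with ha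
  have hapos : ∀ k, 0 < a k := fun k => by
    simp only [ha]; positivity
  have ham : a m = a 0 + 1 / 2 := by
    simp only [ha]
    rw [hNval]
    have h2 : (2:ℝ) ^ m - 1 ≠ 0 := by rw [← hNval]; exact hN0
    field_simp
    ring
  have hdup : ∀ k, Real.Gamma (a k) * Real.Gamma (a k + 1 / 2)
      = Real.Gamma (a (k + 1)) * ((2:ℝ) ^ ((1:ℝ) - 2 * a k) * Real.sqrt Real.pi) := by
    intro k
    have h2a : 2 * a k = a (k + 1) := by
      simp only [ha]; field_simp; ring
    rw [Real.Gamma_mul_Gamma_add_half, h2a, mul_assoc]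
  have hsum : ∑ k ∈ Finset.range m, a k = 1 / 2 := by
    simp only [ha]
    rw [← Finset.sum_div, geom_sum_eq (by norm_num : (2:ℝ) ≠ 1), ← hNval]
    field_simp
    ring
  set A := ∏ k ∈ Finset.range m, Real.Gamma (a k) with hA
  set B := ∏ k ∈ Finset.range m, Real.Gamma (a k + 1 / 2) with hB
  have hApos : 0 < A := Finset.prod_pos fun k _ => Real.Gamma_pos_of_pos (hapos k)
  have key : A * B = (∏ k ∈ Finset.range m, Real.Gamma (a (k + 1)))
      * ((2:ℝ) ^ ((m:ℝ) - 1) * Real.sqrt Real.pi ^ m) := by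
    rw [hA, hB, ← Finset.prod_mul_distrib]
    rw [Finset.prod_congr rfl fun k _ => hdup k]
    rw [Finset.prod_mul_distrib, Finset.prod_mul_distrib]
    congr 1
    congr 1
    · rw [← Real.rpow_sum_of_pos (by norm_num : (0:ℝ) < 2)]
      congr 1
      rw [Finset.sum_sub_distrib, ← Finset.mul_sum, hsum]
      simp
    · simp
  have hshift : (∏ k ∈ Finset.range m, Real.Gamma (a (k + 1))) * Real.Gamma (a 0)
      = A * Real.Gamma (a m) := by
    have h1 : ∏ k ∈ Finset.range (m + 1), Real.Gamma (a k)
        = (∏ k ∈ Finset.range m, Real.Gamma (a (k + 1))) * Real.Gamma (a 0) :=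
      Finset.prod_range_succ' _ m
    have h2 : ∏ k ∈ Finset.range (m + 1), Real.Gamma (a k) = A * Real.Gamma (a m) :=
      Finset.prod_range_succ _ m
    rw [← h1, h2]
  have hIcc : ∏ k ∈ Finset.Icc 1 (m - 1), Real.Gamma (((2 ^ k : ℕ) + n) / (2 * n))
      = ∏ k ∈ Finset.Icc 1 (m - 1), Real.Gamma (a k + 1 / 2) := by
    apply Finset.prod_congr rfl
    intro k _
    congr 1
    simp only [ha, ← hNdef]
    push_cast
    field_simp
  have hBsplit : B = Real.Gamma (a 0 + 1 / 2) * ∏ k ∈ Finset.Icc 1 (m - 1),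
      Real.Gamma (a k + 1 / 2) := by
    have hIco : Finset.Icc 1 (m - 1) = Finset.Ico 1 m := by
      rw [← Finset.Ico_add_one_right_eq_Icc]
      congr 1
      omega
    rw [hIco, Finset.prod_Ico_eq_prod_range]
    have hm' : m - 1 + 1 = m := by omega
    rw [hB, ← hm', Finset.prod_range_succ']
    simp [mul_comm, add_comm]
  have hG0 : (0:ℝ) < Real.Gamma (a 0) := Real.Gamma_pos_of_pos (hapos 0)
  have hGh : (0:ℝ) < Real.Gamma (a 0 + 1 / 2) := Real.Gamma_pos_of_pos (by
    have := hapos 0; linarith)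
  have hBval : B * Real.Gamma (a 0)
      = Real.Gamma (a m) * ((2:ℝ) ^ ((m:ℝ) - 1) * Real.sqrt Real.pi ^ m) := by
    refine mul_left_cancel₀ hApos.ne' ?_
    calc A * (B * Real.Gamma (a 0))
        = (A * B) * Real.Gamma (a 0) := by ring
      _ = ((∏ k ∈ Finset.range m, Real.Gamma (a (k + 1))) * Real.Gamma (a 0))
          * ((2:ℝ) ^ ((m:ℝ) - 1) * Real.sqrt Real.pi ^ m) := by rw [key]; ring
      _ = _ := by rw [hshift]; ring
  have hP : Real.Gamma (a 0) * (∏ k ∈ Finset.Icc 1 (m - 1), Real.Gamma (a k + 1 / 2))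
      = (2:ℝ) ^ ((m:ℝ) - 1) * Real.sqrt Real.pi ^ m := by
    rw [ham, hBsplit] at hBval
    refine mul_left_cancel₀ hGh.ne' ?_
    rw [← hBval]
    ring
  have harg : (1:ℝ) / (2 * N) = a 0 := by simp [ha]
  rw [hIcc, harg, hP]
  congr 1
  · rw [show (m:ℝ) - 1 = ((m - 1 : ℕ) : ℝ) by
      rw [Nat.cast_sub (by omega)]; norm_num]
    rw [Real.rpow_natCast]
  · rw [Real.sqrt_eq_rpow, ← Real.rpow_natCast (Real.pi ^ ((1:ℝ)/2)) m,
      ← Real.rpow_mul Real.pi_pos.le]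
    congr 1
    ring
end

section
/- For n > 1 odd, ∏_{x ∈ Φ(2n)} Γ(x/(2n)) = (2π)^{φ(n)/2}, where Φ(2n) is the set of integers in (0,2n) coprime to 2n and φ is Euler's totient. -/
open Finset Real Polynomial

private lemma not_pp (n : ℕ) (hn : 1 < n) (hodd : Odd n) :
    ∀ {p : ℕ}, p.Prime → ∀ k : ℕ, p ^ k ≠ 2 * n := by
  intro p hp k hpk
  have h2 : 2 ∣ p ^ k := hpk ▸ ⟨n, rfl⟩
  have hp2 : p = 2 :=
    ((Nat.prime_dvd_prime_iff_eq Nat.prime_two hp).mp (Nat.prime_two.dvd_of_dvd_pow h2)).symm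
  subst hp2
  -- 2 ^ k = 2 * n, n > 1 odd
  have hk2 : 2 ≤ k := by
    by_contra h
    interval_cases k <;> omega
  have : 2 ∣ n := by
    have : 2 * 2 ∣ 2 ^ k := by
      have : 2 ^ 2 ∣ 2 ^ k := pow_dvd_pow 2 hk2
      simpa [pow_two] using this
    omega
  exact (Nat.not_even_iff_odd.mpr hodd) (even_iff_two_dvd.mpr this)

private lemma sin_prod (n : ℕ) (hn : 1 < n) (hodd : Odd n) :
    ∏ x ∈ Finset.filter (fun x => Nat.Coprime x (2 * n)) (Finset.range (2 * n)),
        (2 * Real.sin (Real.pi * x / (2 * n))) = 1 := by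
  set m := 2 * n with hm
  have hm1 : 1 < m := by omega
  have hm0 : (m : ℕ) ≠ 0 := by omega
  set ζ : ℂ := Complex.exp (2 * Real.pi * Complex.I / m) with hζdef
  haveI : NeZero m := ⟨hm0⟩
  have hζ : IsPrimitiveRoot ζ m := Complex.isPrimitiveRoot_exp m hm0
  set S := Finset.filter (fun x => Nat.Coprime x m) (Finset.range m) with hS
  -- the complex product
  have hcprod : ∏ x ∈ S, (1 - ζ ^ x) = 1 := by
    have h1 : eval 1 (cyclotomic m ℂ) = 1 :=
      eval_one_cyclotomic_not_prime_pow (not_pp n hn hodd)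
    rw [cyclotomic_eq_prod_X_sub_primitiveRoots hζ, eval_prod] at h1
    simp only [eval_sub, eval_X, eval_C] at h1
    refine Eq.trans ?_ h1
    refine Finset.prod_bij (fun i _ => ζ ^ i) ?_ ?_ ?_ ?_
    · intro a ha
      simp only [hS, mem_filter, mem_range] at ha
      rw [mem_primitiveRoots (by omega : 0 < m)]
      exact hζ.pow_of_coprime a ha.2
    · intro a ha b hb H
      simp only [hS, mem_filter, mem_range] at ha hb
      exact hζ.pow_inj ha.1 hb.1 H
    · intro ξ hξ
      rw [mem_primitiveRoots (by omega : 0 < m), hζ.isPrimitiveRoot_iff] at hξ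
      rcases hξ with ⟨i, hin, hi, H⟩
      exact ⟨i, Finset.mem_filter.mpr ⟨Finset.mem_range.mpr hin, hi⟩, H⟩
    · intro a _; rfl
  have habs : ∏ x ∈ S, ‖1 - ζ ^ x‖ = 1 := by
    rw [← norm_prod, hcprod, norm_one]
  rw [← habs]
  refine Finset.prod_congr rfl ?_
  intro x hx
  simp only [hS, mem_filter, mem_range] at hx
  have hx0 : 0 < x := by
    rcases Nat.eq_zero_or_pos x with rfl | h
    · exfalso; have := hx.2; simp [Nat.Coprime] at this; omega
    · exact h
  set θ : ℝ := 2 * Real.pi * x / m with hθ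
  have hζx : ζ ^ x = Complex.exp (θ * Complex.I) := by
    rw [hζdef, ← Complex.exp_nat_mul]
    congr 1
    push_cast [hθ]
    ring
  have hπ := Real.pi_pos
  have hθ0 : 0 < θ := by
    rw [hθ]; positivity
  have hθ2 : θ < 2 * Real.pi := by
    rw [hθ, div_lt_iff₀ (by positivity)]
    have : (x : ℝ) < m := by exact_mod_cast hx.1
    nlinarith
  have hsin0 : 0 ≤ Real.sin (θ / 2) := by
    apply Real.sin_nonneg_of_nonneg_of_le_pi <;> [linarith; linarith]
  have key : ‖1 - Complex.exp (θ * Complex.I)‖ = 2 * Real.sin (θ / 2) := by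
    rw [Complex.exp_mul_I]
    have : (1 : ℂ) - (Complex.cos θ + Complex.sin θ * Complex.I)
        = Complex.ofReal (1 - Real.cos θ) + Complex.ofReal (-Real.sin θ) * Complex.I := by
      push_cast; ring
    rw [this, Complex.norm_def, Complex.normSq_add_mul_I]
    have hc : Real.cos θ = 1 - 2 * Real.sin (θ / 2) ^ 2 := by
      have := Real.cos_two_mul (θ / 2)
      have hs := Real.sin_sq_add_cos_sq (θ / 2)
      have h2 : 2 * (θ / 2) = θ := by ring
      rw [h2] at this
      nlinarith
    rw [show (1 - Real.cos θ) ^ 2 + (-Real.sin θ) ^ 2 = (2 * Real.sin (θ / 2)) ^ 2 by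
      have hs := Real.sin_sq_add_cos_sq θ
      nlinarith]
    exact Real.sqrt_sq (by positivity)
  rw [hζx, key]
  have h2 : θ / 2 = Real.pi * x / m := by rw [hθ]; ring
  rw [h2, hm]
  push_cast
  ring_nf

theorem full_product (n : ℕ) (hn : 1 < n) (hodd : Odd n) :
    ∏ x ∈ Finset.filter (fun x => Nat.Coprime x (2 * n)) (Finset.range (2 * n)),
        Real.Gamma ((x : ℝ) / (2 * n)) =
      (2 * Real.pi) ^ ((Nat.totient n : ℝ) / 2) := by
  set m := 2 * n with hm
  have hm1 : 1 < m := by omega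
  set S := Finset.filter (fun x => Nat.Coprime x m) (Finset.range m) with hS
  have hπ := Real.pi_pos
  have hxpos : ∀ x ∈ S, 0 < x ∧ x < m := by
    intro x hx
    simp only [hS, mem_filter, mem_range] at hx
    refine ⟨?_, hx.1⟩
    rcases Nat.eq_zero_or_pos x with rfl | h
    · exfalso; have := hx.2; simp [Nat.Coprime] at this; omega
    · exact h
  -- cardinality
  have hcard : S.card = Nat.totient n := by
    have h1 : S.card = Nat.totient m := by
      rw [Nat.totient_eq_card_coprime]
      congr 1
      apply Finset.filter_congr
      intro x _
      exact ⟨fun h => Nat.coprime_comm.mp h, fun h => Nat.coprime_comm.mp h⟩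
    rw [h1, hm, Nat.totient_mul (Nat.coprime_two_left.mpr hodd), Nat.totient_two, one_mul]
  -- the square of the product
  set P := ∏ x ∈ S, Real.Gamma ((x : ℝ) / m) with hP
  have hPpos : 0 < P := by
    apply Finset.prod_pos
    intro x hx
    apply Real.Gamma_pos_of_pos
    have := (hxpos x hx).1
    positivity
  have hrefl : P ^ 2 = (2 * Real.pi) ^ (Nat.totient n) := by
    have hmem : ∀ a ∈ S, m - a ∈ S := by
      intro a ha
      have hb := hxpos a ha
      simp only [hS, mem_filter, mem_range] at ha ⊢
      exact ⟨by omega, (Nat.coprime_self_sub_left (by omega)).mpr ha.2⟩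
    have hbij : ∏ x ∈ S, Real.Gamma ((x : ℝ) / m) =
        ∏ x ∈ S, Real.Gamma (1 - (x : ℝ) / m) := by
      refine Finset.prod_nbij' (fun i => m - i) (fun i => m - i) hmem hmem ?_ ?_ ?_
      · intro a ha; have := hxpos a ha; show m - (m - a) = a; omega
      · intro a ha; have := hxpos a ha; show m - (m - a) = a; omega
      · intro a ha
        have hb := hxpos a ha
        congr 1
        have h1 : ((m - a : ℕ) : ℝ) = (m : ℝ) - a := by
          push_cast [Nat.cast_sub (by omega : a ≤ m)]; ring
        rw [h1]
        have hmne : (m : ℝ) ≠ 0 := by positivity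
        field_simp
        ring
    calc P ^ 2 = ∏ x ∈ S, (Real.Gamma ((x : ℝ) / m) * Real.Gamma (1 - (x : ℝ) / m)) := by
          rw [Finset.prod_mul_distrib, ← hbij, hP]; ring
      _ = ∏ x ∈ S, ((2 * Real.pi) / (2 * Real.sin (Real.pi * x / m))) := by
          refine Finset.prod_congr rfl fun x hx => ?_
          rw [Real.Gamma_mul_Gamma_one_sub]
          rw [mul_div_assoc, mul_comm (Real.pi) ((x:ℝ)/m), ← mul_div_assoc]
          rw [mul_div_mul_left _ _ (two_ne_zero)]
          congr 2
          ring
      _ = (2 * Real.pi) ^ S.card / ∏ x ∈ S, (2 * Real.sin (Real.pi * x / m)) := by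
          rw [Finset.prod_div_distrib, Finset.prod_const]
      _ = (2 * Real.pi) ^ (Nat.totient n) := by
          have hsinp : ∏ x ∈ S, (2 * Real.sin (Real.pi * x / (m : ℝ))) = 1 := by
            rw [← sin_prod n hn hodd]
            refine Finset.prod_congr (by rw [hS, hm]) fun x hx => ?_
            congr 2
            rw [hm]; push_cast; ring
          rw [hsinp, hcard, div_one]
  -- conclude via positivity
  have hR : ((2 * Real.pi) ^ ((Nat.totient n : ℝ) / 2)) ^ 2
      = (2 * Real.pi) ^ (Nat.totient n) := by
    rw [← Real.rpow_natCast ((2 * Real.pi) ^ ((Nat.totient n : ℝ) / 2)) 2,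
      ← Real.rpow_mul (by positivity),
      show (Nat.totient n : ℝ) / 2 * ((2:ℕ):ℝ) = (Nat.totient n : ℝ) by push_cast; ring]
    exact Real.rpow_natCast _ _
  have hPR := hrefl.trans hR.symm
  have hfin : P = (2 * Real.pi) ^ ((Nat.totient n : ℝ) / 2) :=
    (sq_eq_sq₀ hPpos.le (by positivity)).mp hPR
  rw [← hfin, hP]
  refine Finset.prod_congr rfl fun x hx => ?_
  congr 1
  rw [hm]; push_cast; ring
end
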